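/- Let $b_j$ be real numbers with $0 < b_- \le b_j \le b_+$ for all $j$, and for $z = E + i\delta \in \mathbb{C}$ consider $B_j^z = \begin{pmatrix} 2 - z b_j & -1 \\ 1 & 0 \end{pmatrix}$ (with $b_j$ playing the role of $1/a_j$), and $F_n^z = B_{n-1}^z \cdots B_0^z$. There exists $0 < E_0 < 1$ such that if $-E_0 < E < 0$, then for every $n \ge 1$ and every $\delta\in\mathbb{R}$, $\log\|F_n^z\|_{\infty} \ge \frac{n}{2}\sqrt{-E\, b_-}$, where $\|\cdot\|_\infty$ is the entrywise maximum norm. -/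

import Mathlib

open Matrix

attribute [local instance] Matrix.normedAddCommGroup

/-- Lower bound on harmonic-chain transfer matrices in the hyperbolic region: there is
`0 < E₀ < 1` such that for `z = E + iδ` with `-E₀ < E < 0`, one has
`log ‖F_n^z‖ ≥ (n/2) √(-E b₋)` for every `n ≥ 1` (entrywise max norm). -/
lemma half_le_log_one_add {t : ℝ} (h0 : 0 ≤ t) (h1 : t ≤ 1) : t / 2 ≤ Real.log (1 + t) := by
  have hp : (0:ℝ) < 1 + t := by linarith
  have h2 := Real.log_le_sub_one_of_pos (inv_pos.2 hp)
  rw [Real.log_inv] at h2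
  have h4 : (1+t)⁻¹ * (1+t) = 1 := inv_mul_cancel₀ (by linarith)
  nlinarith [inv_pos.2 hp]

theorem hyperbolic_lower_bound
    (b : ℕ → ℝ) (bm bp : ℝ) (hbm : 0 < bm)
    (hb : ∀ j, bm ≤ b j ∧ b j ≤ bp)
    (Bmat : ℂ → ℕ → Matrix (Fin 2) (Fin 2) ℂ)
    (hB : ∀ (z : ℂ) (j : ℕ), Bmat z j = !![2 - z * (b j : ℂ), -1; 1, 0])
    (F : ℂ → ℕ → Matrix (Fin 2) (Fin 2) ℂ)
    (hF0 : ∀ z, F z 0 = 1) (hFs : ∀ z n, F z (n + 1) = Bmat z n * F z n) :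
    ∃ E0 : ℝ, 0 < E0 ∧ E0 < 1 ∧
      ∀ (E δ : ℝ), -E0 < E → E < 0 → ∀ n : ℕ, 1 ≤ n →
        Real.log ‖F ((E : ℂ) + δ * Complex.I) n‖ ≥ (n : ℝ) / 2 * Real.sqrt (-E * bm) := by
  have hbm1 : (0:ℝ) < 1 / (bm + 1) := by positivity
  refine ⟨min (1/2) (1/(bm+1)), lt_min (by norm_num) hbm1,
    lt_of_le_of_lt (min_le_left _ _) (by norm_num), ?_⟩
  intro E δ hE1 hE2 n hn
  set z : ℂ := (E:ℂ) + δ * Complex.I with hz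
  have hx0 : 0 < -E := by linarith
  have hxlt : -E < 1/(bm+1) := lt_of_lt_of_le (by linarith) (min_le_right _ _)
  set s : ℝ := -E * bm with hsdef
  have hs0 : 0 < s := mul_pos hx0 hbm
  have hs1 : s < 1 := by
    have h1 : -E * (bm + 1) < 1 := by
      rw [← lt_div_iff₀ (by linarith : (0:ℝ) < bm + 1)]
      simpa [one_div] using hxlt
    nlinarith
  set t : ℝ := Real.sqrt s with htdef
  have ht2 : t ^ 2 = s := Real.sq_sqrt hs0.le
  have ht0 : 0 < t := Real.sqrt_pos.2 hs0
  have ht1 : t ≤ 1 := by nlinarith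
  -- entrywise recursion
  have hrec : ∀ m, (F z (m+1)) 0 0 = (2 - z * (b m : ℂ)) * (F z m) 0 0 - (F z m) 1 0
      ∧ (F z (m+1)) 1 0 = (F z m) 0 0 := by
    intro m
    rw [hFs, hB]
    constructor <;> simp [Matrix.mul_apply, Fin.sum_univ_two] <;> try ring
  -- lower bound on |2 - z b_m|
  have habs : ∀ m, 2 + s ≤ ‖(2 - z * (b m : ℂ))‖ := by
    intro m
    have hre : (2 - z * (b m : ℂ)).re = 2 + (-E) * b m := by
      simp [hz, Complex.mul_re]; ring
    have h1 : 2 + s ≤ (2 - z * (b m : ℂ)).re := by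
      rw [hre]
      have := (hb m).1
      nlinarith
    calc 2 + s ≤ (2 - z * (b m : ℂ)).re := h1
      _ ≤ ‖(2 - z * (b m : ℂ))‖ := Complex.re_le_norm _
      _ = ‖(2 - z * (b m : ℂ))‖ := rfl
  -- main induction
  have key : ∀ m : ℕ, (1 + t) * ‖(F z (m+1)) 1 0‖ ≤ ‖(F z (m+1)) 0 0‖
      ∧ (1 + t) ^ (m+1) ≤ ‖(F z (m+1)) 0 0‖ := by
    intro m
    induction m with
    | zero =>
      obtain ⟨h00, h10⟩ := hrec 0
      have e00 : (F z 0) 0 0 = 1 := by rw [hF0]; simp [Matrix.one_apply]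
      have e10 : (F z 0) 1 0 = 0 := by rw [hF0]; simp [Matrix.one_apply]
      rw [h00, h10, e00, e10]
      have h := habs 0
      constructor
      · simpa using le_trans (by nlinarith) h
      · simpa using le_trans (by nlinarith) h
    | succ k ih =>
      obtain ⟨ih1, ih2⟩ := ih
      obtain ⟨h00, h10⟩ := hrec (k+1)
      set P := (F z (k+1)) 0 0
      set Q := (F z (k+1)) 1 0
      have hsub : ‖(2 - z * (b (k+1) : ℂ))‖ * ‖P‖ - ‖Q‖ ≤ ‖(2 - z * (b (k+1) : ℂ)) * P - Q‖ := by
        calc ‖(2 - z * (b (k+1) : ℂ))‖ * ‖P‖ - ‖Q‖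
            = ‖(2 - z * (b (k+1) : ℂ)) * P‖ - ‖Q‖ := by rw [norm_mul]
          _ ≤ _ := norm_sub_norm_le _ _
      have ha := habs (k+1)
      have hQ0 : (0:ℝ) ≤ ‖Q‖ := norm_nonneg _
      have hP0 : (0:ℝ) ≤ ‖P‖ := norm_nonneg _
      have hstep : (1 + t) * ‖P‖ ≤ ‖(2 - z * (b (k+1) : ℂ)) * P - Q‖ := by
        have hn1 : (0:ℝ) ≤ 1 + s - t := by nlinarith
        have h5 := mul_le_mul_of_nonneg_left ih1 hn1
        have h6 : ‖Q‖ ≤ (1 + s - t) * ‖P‖ := by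
          nlinarith [mul_nonneg (mul_nonneg hs0.le ht0.le) hQ0]
        nlinarith [mul_le_mul_of_nonneg_right ha hP0]
      constructor
      · rw [h00, h10]; exact hstep
      · rw [h00]
        calc (1 + t) ^ (k+2) = (1 + t) * (1 + t) ^ (k+1) := by ring
          _ ≤ (1 + t) * ‖P‖ := by nlinarith
          _ ≤ _ := hstep
  -- conclude
  obtain ⟨m, rfl⟩ : ∃ m, n = m + 1 := ⟨n - 1, (Nat.succ_pred_eq_of_pos hn).symm⟩
  have hent : ‖(F z (m+1)) 0 0‖ ≤ ‖F z (m+1)‖ := Matrix.norm_entry_le_entrywise_sup_norm _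
  have hpow : (1 + t) ^ (m+1) ≤ ‖F z (m+1)‖ := le_trans (key m).2 hent
  have hpos : (0:ℝ) < (1 + t) ^ (m+1) := pow_pos (by linarith) _
  have hlog1 : Real.log ((1+t) ^ (m+1)) ≤ Real.log ‖F z (m+1)‖ :=
    Real.log_le_log hpos hpow
  have hlogt : t / 2 ≤ Real.log (1 + t) := half_le_log_one_add ht0.le ht1
  rw [ge_iff_le]
  calc ((m+1 : ℕ) : ℝ) / 2 * t = ((m+1 : ℕ) : ℝ) * (t / 2) := by ring
    _ ≤ ((m+1 : ℕ) : ℝ) * Real.log (1+t) := by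
        have : (0:ℝ) ≤ ((m+1 : ℕ) : ℝ) := Nat.cast_nonneg _
        exact mul_le_mul_of_nonneg_left hlogt this
    _ = Real.log ((1+t) ^ (m+1)) := (Real.log_pow _ _).symm
    _ ≤ Real.log ‖F z (m+1)‖ := hlog1
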